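/- arXiv:2511.21534 — 4 statements merged into one kernel-verified Lean document; each statement's English description precedes it below -/
import Mathlib

section
/- Weighting identity (key step in the proof of Theorem 1): under consistency, positivity, and weak conditional exchangeability, for each a ∈ {0,1}: E[ 1{A=a}·Y / e_a ] = E[ Y^(a) · ε_a ]. Consequently the naive functional satisfies ψ = E[Y^(1)·ε₁] − E[Y^(0)·ε₀]. -/
open MeasureTheory ProbabilityTheory Set

/-- The indicator function of a set, as a real-valued random variable. -/
noncomputable def ind {Ω : Type*} (s : Set Ω) : Ω → ℝ := s.indicator fun _ => 1

lemma ind_of_mem {Ω : Type*} {s : Set Ω} {ω : Ω} (h : ω ∈ s) : ind s ω = 1 :=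
  Set.indicator_of_mem h _

lemma ind_of_not_mem {Ω : Type*} {s : Set Ω} {ω : Ω} (h : ω ∉ s) : ind s ω = 0 :=
  Set.indicator_of_notMem h _

lemma norm_ind_le {Ω : Type*} (s : Set Ω) (ω : Ω) : ‖ind s ω‖ ≤ 1 := by
  by_cases h : ω ∈ s
  · rw [ind_of_mem h]; simp
  · rw [ind_of_not_mem h]; simp

lemma nat_top_eq_generateFrom_singletons :
    (⊤ : MeasurableSpace ℕ) =
      MeasurableSpace.generateFrom (Set.range fun n : ℕ => ({n} : Set ℕ)) := by
  refine le_antisymm (fun s _ => ?_) le_top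
  have : s = ⋃ n ∈ s, ({n} : Set ℕ) := by ext; simp
  rw [this]
  exact MeasurableSet.biUnion s.to_countable
    (fun n _ => MeasurableSpace.measurableSet_generateFrom ⟨n, rfl⟩)

lemma isPiSystem_nat_singletons :
    IsPiSystem (Set.range fun n : ℕ => ({n} : Set ℕ)) := by
  rintro _ ⟨n, rfl⟩ _ ⟨m, rfl⟩ hne
  obtain ⟨k, hk⟩ := hne
  simp only [Set.mem_inter_iff, Set.mem_singleton_iff] at hk
  obtain ⟨rfl, rfl⟩ := hk
  exact ⟨k, by simp⟩

/-- From conditional independence of `X : Ω → ℝ` and `A : Ω → ℕ` given `mF`, almost every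
conditional distribution `condexpKernel (mΩ := mΩ) μ mF ω` makes `X` and `A` independent. -/
lemma condIndepFun_ae_indepFun
    {Ω : Type*} [mΩ : MeasurableSpace Ω] [StandardBorelSpace Ω] [Nonempty Ω]
    (μ : Measure Ω) [IsProbabilityMeasure μ]
    {X : Ω → ℝ} {A : Ω → ℕ} (hXm : Measurable X) (hAm : Measurable A)
    {mF : MeasurableSpace Ω} (hF : mF ≤ mΩ)
    (h : CondIndepFun mF hF X A μ) :
    ∀ᵐ ω ∂μ, IndepFun X A (condExpKernel (mΩ := mΩ) μ mF ω) := by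
  have h' : ∀ (q : ℚ) (n : ℕ), ∀ᵐ ω ∂(μ.trim hF),
      condExpKernel (mΩ := mΩ) μ mF ω (X ⁻¹' Iio (q : ℝ) ∩ A ⁻¹' {n})
        = condExpKernel (mΩ := mΩ) μ mF ω (X ⁻¹' Iio (q : ℝ)) * condExpKernel (mΩ := mΩ) μ mF ω (A ⁻¹' {n}) :=
    fun q n => h.measure_inter_preimage_eq_mul _ _ measurableSet_Iio
      (measurableSet_singleton n)
  have h2 : ∀ᵐ ω ∂(μ.trim hF), ∀ (q : ℚ) (n : ℕ),
      condExpKernel (mΩ := mΩ) μ mF ω (X ⁻¹' Iio (q : ℝ) ∩ A ⁻¹' {n})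
        = condExpKernel (mΩ := mΩ) μ mF ω (X ⁻¹' Iio (q : ℝ)) * condExpKernel (mΩ := mΩ) μ mF ω (A ⁻¹' {n}) := by
    rw [ae_all_iff]; intro q; rw [ae_all_iff]; exact h' q
  have h3 := ae_of_ae_trim hF h2
  filter_upwards [h3] with ω hω
  have hind : Indep (MeasurableSpace.comap X inferInstance)
      (MeasurableSpace.comap A inferInstance) (condExpKernel (mΩ := mΩ) μ mF ω) := by
    have hm1 : (MeasurableSpace.comap X inferInstance : MeasurableSpace Ω)
        = MeasurableSpace.generateFrom ((Set.preimage X) '' (⋃ a : ℚ, {Iio (a : ℝ)})) := by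
      conv_lhs => rw [show (inferInstance : MeasurableSpace ℝ) = borel ℝ from
        BorelSpace.measurable_eq, Real.borel_eq_generateFrom_Iio_rat]
      exact MeasurableSpace.comap_generateFrom
    have hm2 : (MeasurableSpace.comap A inferInstance : MeasurableSpace Ω)
        = MeasurableSpace.generateFrom
            ((Set.preimage A) '' (Set.range fun n : ℕ => ({n} : Set ℕ))) := by
      conv_lhs => rw [show (inferInstance : MeasurableSpace ℕ) = ⊤ from rfl,
        nat_top_eq_generateFrom_singletons]
      exact MeasurableSpace.comap_generateFrom
    refine IndepSets.indep hXm.comap_le hAm.comap_le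
      (Real.isPiSystem_Iio_rat.comap X) (isPiSystem_nat_singletons.comap A) hm1 hm2 ?_
    rw [IndepSets_iff]
    rintro _ _ ⟨s1, hs1, rfl⟩ ⟨s2, hs2, rfl⟩
    simp only [Set.mem_iUnion, Set.mem_singleton_iff] at hs1
    obtain ⟨q, rfl⟩ := hs1
    obtain ⟨n, rfl⟩ := hs2
    exact hω q n
  exact hind

/-- Product formula for conditional expectation with an indicator of the form `1{A = a}`,
under conditional independence. -/
lemma condexp_mul_ind
    {Ω : Type*} [mΩ : MeasurableSpace Ω] [StandardBorelSpace Ω] [Nonempty Ω]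
    (μ : Measure Ω) [IsProbabilityMeasure μ]
    {X : Ω → ℝ} {A : Ω → ℕ} (hXm : Measurable X) (hAm : Measurable A)
    (hXint : Integrable X μ)
    {mF : MeasurableSpace Ω} (hF : mF ≤ mΩ)
    (h : CondIndepFun mF hF X A μ) (a : ℕ) :
    μ[fun ω => X ω * ind {ω' | A ω' = a} ω|mF]
      =ᵐ[μ] fun ω => (μ[X|mF]) ω * (μ[ind {ω' | A ω' = a}|mF]) ω := by
  letI : MeasurableSpace Ω := mΩ
  set I : Ω → ℝ := ind {ω' | A ω' = a} with hIdef
  have hs : MeasurableSet {ω' | A ω' = a} := hAm (measurableSet_singleton a)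
  have hIint : Integrable I μ := (integrable_const (1:ℝ)).indicator hs
  have hXI : Integrable (fun ω => X ω * I ω) μ :=
    (hXint.bdd_mul (c := 1) hIint.aestronglyMeasurable
      (Filter.Eventually.of_forall (norm_ind_le _))).congr
      (Filter.Eventually.of_forall fun ω => mul_comm _ _)
  have hIφ : I = (fun n : ℕ => if n = a then (1:ℝ) else 0) ∘ A := by
    funext ω
    by_cases hω : A ω = a
    · rw [hIdef, ind_of_mem (by exact hω)]
      simp [hω]
    · rw [hIdef, ind_of_not_mem (by exact hω)]
      simp [hω]
  have hae := condIndepFun_ae_indepFun μ hXm hAm hF h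
  have h1 := condExp_ae_eq_integral_condExpKernel hF hXI
  have h2 := condExp_ae_eq_integral_condExpKernel hF hXint
  have h3 := condExp_ae_eq_integral_condExpKernel hF hIint
  have hXa : ∀ᵐ ω ∂μ, Integrable X (condExpKernel μ mF ω) := hXint.condExpKernel_ae
  have hIa : ∀ᵐ ω ∂μ, Integrable I (condExpKernel μ mF ω) := hIint.condExpKernel_ae
  filter_upwards [h1, h2, h3, hae, hXa, hIa] with ω e1 e2 e3 hind hXi hIi
  rw [e1, e2, e3]
  have hfun : IndepFun X I (condExpKernel μ mF ω) := by
    rw [hIφ]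
    exact hind.comp measurable_id (measurable_of_countable _)
  exact hfun.integral_mul_eq_mul_integral hXi.1 hIi.1

/-- **Weighting identity (key step in the proof of Theorem 1).**  In the reference
population, under consistency, positivity, and weak conditional exchangeability, for each
`a ∈ {0,1}` one has `E[1{A=a}·Y / e_a] = E[Y^(a) · ε_a]`, where `e_a = P(A=a|𝓖)` is the
pseudo-propensity score and `ε_a = π_a/e_a` is the MEW score.  Consequently the naive
functional satisfies `ψ = E[Y^(1)·ε₁] − E[Y^(0)·ε₀]`. -/
theorem weighting_identity
    {Ω : Type*} [mΩ : MeasurableSpace Ω] [StandardBorelSpace Ω] [Nonempty Ω]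
    (μ : Measure Ω) [IsProbabilityMeasure μ]
    (gmax : ℕ)
    (A G : Ω → ℕ) (hA : ∀ ω, A ω ≤ 1) (hG : ∀ ω, G ω ≤ gmax)
    (hAmeas : Measurable A) (hGmeas : Measurable G)
    (Ypo : ℕ → ℕ → Ω → ℝ)
    (hYpomeas : ∀ a ≤ 1, ∀ g ≤ gmax, Measurable (Ypo a g))
    (hYposq : ∀ a ≤ 1, ∀ g ≤ gmax, MemLp (Ypo a g) 2 μ)
    (Ya : ℕ → Ω → ℝ)
    (hYa : ∀ a ω, Ya a ω = ∑ g ∈ Finset.range (gmax + 1), ind {ω' | G ω' = g} ω * Ypo a g ω)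
    (Y : Ω → ℝ)
    (hY : ∀ ω, Y ω = ind {ω' | A ω' = 1} ω * Ya 1 ω + ind {ω' | A ω' = 0} ω * Ya 0 ω)
    (mG mF : MeasurableSpace Ω) (hGF : mG ≤ mF) (hF : mF ≤ mΩ)
    (π e ε : ℕ → Ω → ℝ)
    (hπ : ∀ a, π a = μ[ind {ω | A ω = a} | mF])
    (he : ∀ a, e a = μ[ind {ω | A ω = a} | mG])
    (hπpos : ∀ a ≤ 1, ∀ᵐ ω ∂μ, 0 < π a ω)
    (hepos : ∀ a ≤ 1, ∀ᵐ ω ∂μ, 0 < e a ω)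
    (hexch : ∀ a ≤ 1, CondIndepFun mF hF (Ya a) A μ)
    (hε : ∀ a ω, ε a ω = π a ω / e a ω)
    (hεint : ∀ a ≤ 1, Integrable (ε a) μ)
    (hεYint : ∀ a ≤ 1, Integrable (fun ω => Ya a ω * ε a ω) μ)
    (hwint : ∀ a ≤ 1, Integrable (fun ω => ind {ω' | A ω' = a} ω * Y ω / e a ω) μ) :
    (∀ a ≤ 1,
      ∫ ω, ind {ω' | A ω' = a} ω * Y ω / e a ω ∂μ = ∫ ω, Ya a ω * ε a ω ∂μ)
    ∧ (∫ ω, ind {ω' | A ω' = 1} ω * Y ω / e 1 ω ∂μ)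
        - (∫ ω, ind {ω' | A ω' = 0} ω * Y ω / e 0 ω ∂μ)
      = (∫ ω, Ya 1 ω * ε 1 ω ∂μ) - ∫ ω, Ya 0 ω * ε 0 ω ∂μ := by
  letI : MeasurableSpace Ω := mΩ
  -- measurability and integrability of the potential outcomes `Ya a`
  have hYam : ∀ a ≤ 1, Measurable (Ya a) := by
    intro a ha
    have hfe : Ya a = fun ω => ∑ g ∈ Finset.range (gmax + 1),
        ind {ω' | G ω' = g} ω * Ypo a g ω := funext (hYa a)
    rw [hfe]
    refine Finset.measurable_sum _ fun g hg => ?_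
    exact (measurable_const.indicator (hGmeas (measurableSet_singleton g))).mul
      (hYpomeas a ha g (Nat.lt_succ_iff.mp (Finset.mem_range.mp hg)))
  have hYaint : ∀ a ≤ 1, Integrable (Ya a) μ := by
    intro a ha
    have hterm : Integrable (fun ω => ∑ g ∈ Finset.range (gmax + 1),
        ind {ω' | G ω' = g} ω * Ypo a g ω) μ := by
      refine integrable_finset_sum _ fun g hg => ?_
      have hint : Integrable (Ypo a g) μ :=
        (hYposq a ha g (Nat.lt_succ_iff.mp (Finset.mem_range.mp hg))).integrable one_le_two
      exact hint.bdd_mul (c := 1)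
        ((measurable_const.indicator (hGmeas (measurableSet_singleton g))).aestronglyMeasurable)
        (Filter.Eventually.of_forall (norm_ind_le _))
    exact hterm.congr (Filter.Eventually.of_forall fun ω => (hYa a ω).symm)
  -- consistency: `1{A=a} ⬝ Y = 1{A=a} ⬝ Ya a`
  have hkey : ∀ a ≤ 1, ∀ ω, ind {ω' | A ω' = a} ω * Y ω = ind {ω' | A ω' = a} ω * Ya a ω := by
    intro a ha ω
    by_cases hω : A ω = a
    · have h1 : ind {ω' | A ω' = a} ω = 1 := ind_of_mem hω
      rw [hY ω, h1, one_mul, one_mul]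
      interval_cases a
      · rw [ind_of_mem (show ω ∈ {ω' | A ω' = 0} from hω),
          ind_of_not_mem (show ω ∉ {ω' | A ω' = 1} by simp [Set.mem_setOf_eq, hω])]
        ring
      · rw [ind_of_mem (show ω ∈ {ω' | A ω' = 1} from hω),
          ind_of_not_mem (show ω ∉ {ω' | A ω' = 0} by simp [Set.mem_setOf_eq, hω])]
        ring
    · rw [ind_of_not_mem (show ω ∉ {ω' | A ω' = a} from hω), zero_mul, zero_mul]
  -- the main identity
  have main : ∀ a ≤ 1,
      ∫ ω, ind {ω' | A ω' = a} ω * Y ω / e a ω ∂μ = ∫ ω, Ya a ω * ε a ω ∂μ := by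
    intro a ha
    have hs : MeasurableSet {ω' | A ω' = a} := hAmeas (measurableSet_singleton a)
    have he_sm : StronglyMeasurable[mG] (e a) := (he a) ▸ stronglyMeasurable_condExp
    have he_mF : Measurable[mF] (e a) := (he_sm.measurable).mono hGF le_rfl
    have hw_sm : StronglyMeasurable[mF] (fun ω => (e a ω)⁻¹) :=
      (he_mF.inv).stronglyMeasurable
    have hε_sm : StronglyMeasurable[mF] (ε a) := by
      have hfe : ε a = fun ω => π a ω / e a ω := funext (hε a)
      rw [hfe, hπ a]
      exact (stronglyMeasurable_condExp.measurable.div he_mF).stronglyMeasurable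
    have hIYa : Integrable (fun ω => ind {ω' | A ω' = a} ω * Ya a ω) μ :=
      (hYaint a ha).bdd_mul (c := 1)
        ((measurable_const.indicator hs).aestronglyMeasurable)
        (Filter.Eventually.of_forall (norm_ind_le _))
    have hwf : Integrable (fun ω => (e a ω)⁻¹ * (ind {ω' | A ω' = a} ω * Ya a ω)) μ := by
      refine (hwint a ha).congr (Filter.Eventually.of_forall fun ω => ?_)
      dsimp only
      rw [hkey a ha ω, div_eq_inv_mul]
    have hεYa : Integrable (fun ω => ε a ω * Ya a ω) μ :=
      (hεYint a ha).congr (Filter.Eventually.of_forall fun ω => mul_comm _ _)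
    calc ∫ ω, ind {ω' | A ω' = a} ω * Y ω / e a ω ∂μ
        = ∫ ω, (e a ω)⁻¹ * (ind {ω' | A ω' = a} ω * Ya a ω) ∂μ :=
          integral_congr_ae (Filter.Eventually.of_forall fun ω => by
            dsimp only
            rw [hkey a ha ω, div_eq_inv_mul])
      _ = ∫ ω, (μ[fun ω' => (e a ω')⁻¹ * (ind {ω' | A ω' = a} ω' * Ya a ω')|mF]) ω ∂μ :=
          (integral_condExp hF).symm
      _ = ∫ ω, (e a ω)⁻¹ * (μ[fun ω' => ind {ω'' | A ω'' = a} ω' * Ya a ω'|mF]) ω ∂μ := by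
          refine integral_congr_ae ?_
          have hpull : μ[fun ω' => (e a ω')⁻¹ * (ind {ω' | A ω' = a} ω' * Ya a ω')|mF]
              =ᵐ[μ] fun ω => (e a ω)⁻¹ * (μ[fun ω' => ind {ω'' | A ω'' = a} ω' * Ya a ω'|mF]) ω :=
            condExp_mul_of_stronglyMeasurable_left hw_sm hwf hIYa
          exact hpull
      _ = ∫ ω, (e a ω)⁻¹ * ((μ[Ya a|mF]) ω * (μ[ind {ω' | A ω' = a}|mF]) ω) ∂μ := by
          refine integral_congr_ae ?_
          have hcomm : (fun ω' => ind {ω'' | A ω'' = a} ω' * Ya a ω')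
              = fun ω' => Ya a ω' * ind {ω'' | A ω'' = a} ω' :=
            funext fun ω' => mul_comm _ _
          have hcr := condexp_mul_ind μ (hYam a ha) hAmeas (hYaint a ha) hF (hexch a ha) a
          rw [hcomm]
          filter_upwards [hcr] with ω hω
          rw [hω]
      _ = ∫ ω, (μ[Ya a|mF]) ω * ε a ω ∂μ := by
          refine integral_congr_ae (Filter.Eventually.of_forall fun ω => ?_)
          dsimp only
          rw [hε a ω, hπ a]
          ring
      _ = ∫ ω, (μ[fun ω' => ε a ω' * Ya a ω'|mF]) ω ∂μ := by
          refine integral_congr_ae ?_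
          have hpull : μ[fun ω' => ε a ω' * Ya a ω'|mF]
              =ᵐ[μ] fun ω => ε a ω * (μ[Ya a|mF]) ω :=
            condExp_mul_of_stronglyMeasurable_left hε_sm hεYa (hYaint a ha)
          filter_upwards [hpull] with ω hω
          rw [hω]
          exact mul_comm _ _
      _ = ∫ ω, ε a ω * Ya a ω ∂μ := integral_condExp hF
      _ = ∫ ω, Ya a ω * ε a ω ∂μ :=
          integral_congr_ae (Filter.Eventually.of_forall fun ω => mul_comm _ _)
  refine ⟨main, ?_⟩
  rw [main 1 le_rfl, main 0 (Nat.zero_le 1)]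
end

section
/- Variance bound for the MEW score (Section 3.2): for each a ∈ {0,1}, if 1/e_a is integrable then Var(ε_a) ≤ E[ (1 − e_a)/e_a ], i.e. σ_{ε_a} ≤ sqrt( E[ (1 − e_a)/e_a ] ). (The proof uses 0 ≤ π_a ≤ 1, the identity e_a = E[π_a | 𝓖] a.s., and E[ε_a] = 1.) -/
open MeasureTheory ProbabilityTheory Set

/-- **Variance bound for the MEW score (Section 3.2).**  In the reference population, with
true propensity score `π a = P(A = a | 𝓕)` and pseudo-propensity score `e a = P(A = a | 𝓖)`
for `𝓖 ⊆ 𝓕`, both positive a.s., if the MEW score `ε a = π a / e a` is square-integrable and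
`1 / e a` is integrable, then `Var(ε_a) ≤ E[(1 − e_a) / e_a]` for each `a ∈ {0,1}`. -/
theorem mew_score_variance_bound
    {Ω : Type*} [mΩ : MeasurableSpace Ω]
    (μ : Measure Ω) [IsProbabilityMeasure μ]
    (A : Ω → ℕ) (hA : ∀ ω, A ω ≤ 1) (hAmeas : Measurable A)
    (mG mF : MeasurableSpace Ω) (hGF : mG ≤ mF) (hF : mF ≤ mΩ)
    (π e ε : ℕ → Ω → ℝ)
    (hπ : ∀ a, π a = μ[ind {ω | A ω = a} | mF])
    (he : ∀ a, e a = μ[ind {ω | A ω = a} | mG])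
    (hπpos : ∀ a ≤ 1, ∀ᵐ ω ∂μ, 0 < π a ω)
    (hepos : ∀ a ≤ 1, ∀ᵐ ω ∂μ, 0 < e a ω)
    (hε : ∀ a ω, ε a ω = π a ω / e a ω)
    (hεsq : ∀ a ≤ 1, MemLp (ε a) 2 μ)
    (heinv : ∀ a ≤ 1, Integrable (fun ω => 1 / e a ω) μ) :
    ∀ a ≤ 1, variance (ε a) μ ≤ ∫ ω, (1 - e a ω) / e a ω ∂μ := by
  intro a ha
  have hG : mG ≤ mΩ := hGF.trans hF
  set I : Ω → ℝ := ind {ω | A ω = a} with hI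
  have hIset : MeasurableSet[mΩ] {ω | A ω = a} := hAmeas (measurableSet_singleton a)
  have hI01 : ∀ ω, 0 ≤ I ω ∧ I ω ≤ 1 := by
    intro ω
    simp only [hI, ind]
    by_cases h : ω ∈ {ω | A ω = a} <;>
      simp [Set.indicator_of_mem, Set.indicator_of_notMem, h]
  have hIint : Integrable I μ := by
    refine (integrable_const (1 : ℝ)).mono ?_ ?_
    · exact ((stronglyMeasurable_const.indicator hIset).aestronglyMeasurable :
        AEStronglyMeasurable[mΩ] ({ω | A ω = a}.indicator fun _ => (1:ℝ)) μ)
    · filter_upwards with ω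
      have := hI01 ω
      simp only [Real.norm_eq_abs, abs_of_nonneg this.1, abs_one]
      exact this.2
  -- basic facts about π and e
  have hπint : Integrable (π a) μ := (hπ a) ▸ integrable_condExp
  have hπ0 : 0 ≤ᵐ[μ] π a := by
    rw [hπ a]; exact condExp_nonneg (ae_of_all μ fun ω => (hI01 ω).1)
  have hπ1 : π a ≤ᵐ[μ] fun _ => (1 : ℝ) := by
    rw [hπ a]
    have h1 : μ[(fun _ => (1 : ℝ)) | mF] = fun _ => (1 : ℝ) := condExp_const hF 1
    calc μ[I | mF] ≤ᵐ[μ] μ[(fun _ => (1 : ℝ)) | mF] :=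
          condExp_mono hIint (integrable_const 1)
            (ae_of_all μ fun ω => (hI01 ω).2)
      _ = fun _ => (1 : ℝ) := h1
  have heG : StronglyMeasurable[mG] (e a) := by
    rw [he a]; exact stronglyMeasurable_condExp
  have heπ : μ[π a | mG] =ᵐ[μ] e a := by
    rw [hπ a, he a]; exact condExp_condExp_of_le hGF hF
  have hea := hepos a ha
  -- E[ε] = 1
  have hεmul : ε a = fun ω => (e a ω)⁻¹ * π a ω := by
    funext ω; rw [hε a ω, div_eq_mul_inv, mul_comm]
  have hεint : Integrable (ε a) μ := (hεsq a ha).integrable one_le_two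
  have hmean : ∫ ω, ε a ω ∂μ = 1 := by
    have hginv : StronglyMeasurable[mG] fun ω => (e a ω)⁻¹ :=
      (Measurable.inv heG.measurable).stronglyMeasurable
    have hmulint : Integrable ((fun ω => (e a ω)⁻¹) * π a) μ := by
      have : ((fun ω => (e a ω)⁻¹) * π a) = ε a := by
        funext ω; rw [hεmul]; rfl
      rw [this]; exact hεint
    have hpull := condExp_mul_of_stronglyMeasurable_left hginv hmulint hπint
    calc ∫ ω, ε a ω ∂μ = ∫ ω, ((fun ω => (e a ω)⁻¹) * π a) ω ∂μ := by
          rw [hεmul]; rfl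
      _ = ∫ ω, (μ[(fun ω => (e a ω)⁻¹) * π a | mG]) ω ∂μ :=
          (integral_condExp hG).symm
      _ = ∫ ω, (1 : ℝ) ∂μ := by
          refine integral_congr_ae ?_
          filter_upwards [hpull, heπ, hea] with ω h1 h2 h3
          rw [h1]
          simp only [Pi.mul_apply]
          rw [h2, inv_mul_cancel₀ h3.ne']
      _ = 1 := by simp
  -- E[ε²] ≤ E[1/e]
  have hεsqint : Integrable (fun ω => ε a ω ^ 2) μ := (hεsq a ha).integrable_sq
  have hπsqint : Integrable (fun ω => π a ω ^ 2) μ := by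
    refine (integrable_const (1 : ℝ)).mono ?_ ?_
    · exact (hπint.aestronglyMeasurable.aemeasurable.pow_const 2).aestronglyMeasurable
    · filter_upwards [hπ0, hπ1] with ω h0 h1
      simp only [Real.norm_eq_abs, abs_one]
      rw [abs_of_nonneg (sq_nonneg _)]
      have h0' : (0:ℝ) ≤ π a ω := h0
      nlinarith [h0', h1]
  have hg2 : StronglyMeasurable[mG] fun ω => ((e a ω) ^ 2)⁻¹ :=
    (Measurable.inv (heG.measurable.pow_const 2)).stronglyMeasurable
  have hεsq_eq : (fun ω => ε a ω ^ 2)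
      = (fun ω => ((e a ω) ^ 2)⁻¹) * fun ω => π a ω ^ 2 := by
    funext ω
    simp only [Pi.mul_apply, hε a ω, div_eq_mul_inv]
    ring
  have hsqpull := condExp_mul_of_stronglyMeasurable_left hg2 (hεsq_eq ▸ hεsqint) hπsqint
  have hπsq_le : μ[(fun ω => π a ω ^ 2) | mG] ≤ᵐ[μ] μ[π a | mG] := by
    refine condExp_mono hπsqint hπint ?_
    filter_upwards [hπ0, hπ1] with ω h0 h1
    have h0' : (0:ℝ) ≤ π a ω := h0
    nlinarith [h0', h1]
  have hcond_le : μ[(fun ω => ε a ω ^ 2) | mG] ≤ᵐ[μ] fun ω => 1 / e a ω := by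
    filter_upwards [hsqpull, hπsq_le, heπ, hea] with ω h1 h2 h3 h4
    rw [hεsq_eq, h1]
    simp only [Pi.mul_apply]
    calc ((e a ω) ^ 2)⁻¹ * (μ[(fun ω => π a ω ^ 2) | mG]) ω
        ≤ ((e a ω) ^ 2)⁻¹ * (μ[π a | mG]) ω :=
          mul_le_mul_of_nonneg_left h2 (by positivity)
      _ = ((e a ω) ^ 2)⁻¹ * e a ω := by rw [h3]
      _ = 1 / e a ω := by field_simp
  have hsecond : ∫ ω, ε a ω ^ 2 ∂μ ≤ ∫ ω, 1 / e a ω ∂μ := by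
    calc ∫ ω, ε a ω ^ 2 ∂μ = ∫ ω, (μ[(fun ω => ε a ω ^ 2) | mG]) ω ∂μ :=
          (integral_condExp hG).symm
      _ ≤ ∫ ω, 1 / e a ω ∂μ :=
          integral_mono_ae integrable_condExp (heinv a ha) hcond_le
  -- right-hand side
  have hrhs : ∫ ω, (1 - e a ω) / e a ω ∂μ = (∫ ω, 1 / e a ω ∂μ) - 1 := by
    have : ∫ ω, (1 - e a ω) / e a ω ∂μ = ∫ ω, (1 / e a ω - 1) ∂μ := by
      refine integral_congr_ae ?_
      filter_upwards [hea] with ω h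
      field_simp
    rw [this, integral_sub (heinv a ha) (integrable_const 1)]
    simp
  rw [variance_eq_sub (hεsq a ha), hrhs]
  have : ∫ ω, ε a ω ∂μ = μ[ε a] := rfl
  have hμε : (μ[ε a] : ℝ) = 1 := hmean
  have hμε2 : (μ[ε a ^ 2] : ℝ) = ∫ ω, ε a ω ^ 2 ∂μ := by
    refine integral_congr_ae (ae_of_all μ fun ω => ?_)
    simp
  rw [hμε, hμε2]
  linarith
end

section
/- Transport identity (key step in the proof of Theorem 2): for s ∈ {1,2}, E[ Y^(1) − Y^(0) | S=s ] = Σ_{g=0}^{g_max} E[ τ(g) · P(G=g | S=s, 𝓗) ], where the outer expectation E is unconditional. Consequently φ_s = Σ_{g=0}^{g_max} Cov( τ(g), P(G=g|S=s,𝓗) ) + Σ_{g=0}^{g_max} E[τ(g)] · P(G=g | S=s). -/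
open MeasureTheory ProbabilityTheory Set

/-- The covariance of two real random variables, `Cov(f,g) = E[f·g] − E[f]·E[g]`. -/
noncomputable def cov {Ω : Type*} {m : MeasurableSpace Ω} (μ : MeasureTheory.Measure Ω)
    (f g : Ω → ℝ) : ℝ :=
  (∫ ω, f ω * g ω ∂μ) - (∫ ω, f ω ∂μ) * ∫ ω, g ω ∂μ

section Helpers

variable {Ω : Type*}

lemma ind_apply_mul_apply (s t : Set Ω) (ω : Ω) : ind s ω * ind t ω = ind (s ∩ t) ω := by
  by_cases hs : ω ∈ s <;> by_cases ht : ω ∈ t <;>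
    simp [ind, Set.indicator_apply, hs, ht]

lemma ind_norm_le_one (s : Set Ω) (ω : Ω) : ‖ind s ω‖ ≤ 1 := by
  by_cases hs : ω ∈ s <;> simp [ind, Set.indicator_apply, hs]

lemma ind_nonneg (s : Set Ω) (ω : Ω) : 0 ≤ ind s ω := by
  by_cases hs : ω ∈ s <;> simp [ind, Set.indicator_apply, hs]

lemma ind_le_one (s : Set Ω) (ω : Ω) : ind s ω ≤ 1 := by
  by_cases hs : ω ∈ s <;> simp [ind, Set.indicator_apply, hs]

lemma ind_measurable {m : MeasurableSpace Ω} {s : Set Ω} (hs : MeasurableSet[m] s) :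
    Measurable[m] (ind s) := measurable_const.indicator hs

lemma ind_integrable {m : MeasurableSpace Ω} (μ : Measure Ω) [IsFiniteMeasure μ]
    {s : Set Ω} (hs : MeasurableSet s) : Integrable (ind s) μ :=
  (integrable_const (1:ℝ)).mono' ((ind_measurable hs).aestronglyMeasurable)
    (Filter.Eventually.of_forall (ind_norm_le_one s))

lemma integral_ind {m : MeasurableSpace Ω} (μ : Measure Ω) {s : Set Ω} (hs : MeasurableSet s) :
    ∫ ω, ind s ω ∂μ = (μ s).toReal := by
  exact integral_indicator_one (μ := μ) hs

lemma setIntegral_eq_ind_mul {m : MeasurableSpace Ω} (μ : Measure Ω) {s : Set Ω}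
    (hs : MeasurableSet s) (f : Ω → ℝ) :
    ∫ ω in s, f ω ∂μ = ∫ ω, ind s ω * f ω ∂μ := by
  rw [← integral_indicator hs]
  congr 1; funext ω
  by_cases h : ω ∈ s <;> simp [ind, Set.indicator_apply, h]

lemma integral_mul_comm' {m : MeasurableSpace Ω} (μ : Measure Ω) (f g : Ω → ℝ) :
    ∫ ω, f ω * g ω ∂μ = ∫ ω, g ω * f ω ∂μ :=
  integral_congr_ae (Filter.Eventually.of_forall fun ω => mul_comm _ _)

/-- Key orthogonality step: if the conditional-independence product rule holds between
`X`-preimages and the event `B`, then `E[1_B · X] = E[E[1_B|mH] · X]`. -/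
lemma key_ortho {mΩ : MeasurableSpace Ω} (μ : Measure Ω) [IsProbabilityMeasure μ]
    {mH : MeasurableSpace Ω} (hH : mH ≤ mΩ)
    {X : Ω → ℝ} (hXm : Measurable[mΩ] X) (hXint : Integrable X μ)
    {B : Set Ω} (hB : MeasurableSet[mΩ] B)
    (hprod : ∀ t : Set ℝ, MeasurableSet t →
      (μ[ind (X ⁻¹' t ∩ B)|mH]) =ᵐ[μ] fun ω => (μ[ind (X ⁻¹' t)|mH]) ω * (μ[ind B|mH]) ω) :
    ∫ ω, ind B ω * X ω ∂μ = ∫ ω, (μ[ind B|mH]) ω * X ω ∂μ := by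
  set q := μ[ind B|mH] with hqdef
  have hq_int : Integrable q μ := integrable_condExp
  have hq_sm : StronglyMeasurable[mH] q := stronglyMeasurable_condExp
  have hq_bdd : ∀ᵐ ω ∂μ, ‖q ω‖ ≤ 1 := by
    have h0 : 0 ≤ᵐ[μ] q := condExp_nonneg (Filter.Eventually.of_forall (ind_nonneg B))
    have h1 : q ≤ᵐ[μ] μ[(fun _ => (1:ℝ))|mH] :=
      condExp_mono (ind_integrable μ hB) (integrable_const 1)
        (Filter.Eventually.of_forall (ind_le_one B))
    have hcst : μ[(fun _ => (1:ℝ))|mH] = fun _ => 1 := condExp_const hH 1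
    filter_upwards [h0, h1] with ω h0ω h1ω
    simp only [Pi.zero_apply] at h0ω
    rw [hcst] at h1ω
    rw [Real.norm_eq_abs, abs_le]
    exact ⟨by linarith, h1ω⟩
  set h : Ω → ℝ := fun ω => ind B ω - q ω with hhdef
  have hh_int : Integrable h μ := (ind_integrable μ hB).sub hq_int
  have hh_aesm : AEStronglyMeasurable[mΩ] h μ := hh_int.aestronglyMeasurable
  have hh_bdd : ∀ᵐ ω ∂μ, ‖h ω‖ ≤ 2 := by
    filter_upwards [hq_bdd] with ω hqω
    calc ‖ind B ω - q ω‖ ≤ ‖ind B ω‖ + ‖q ω‖ := norm_sub_le _ _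
      _ ≤ 1 + 1 := add_le_add (ind_norm_le_one B ω) hqω
      _ = 2 := by norm_num
  set mX := MeasurableSpace.comap X inferInstance with hmXdef
  have hmX : mX ≤ mΩ := hXm.comap_le
  -- set integrals of h over mX-measurable sets vanish
  have hset : ∀ A : Set Ω, MeasurableSet[mX] A → ∫ ω in A, h ω ∂μ = 0 := by
    rintro A ⟨t, ht, rfl⟩
    have hA : MeasurableSet[mΩ] (X ⁻¹' t) := hXm ht
    have hiA : Integrable (ind (X ⁻¹' t)) μ := ind_integrable μ hA
    have e1 : ∫ ω, ind (X ⁻¹' t) ω * ind B ω ∂μ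
        = ∫ ω, (μ[ind (X ⁻¹' t)|mH]) ω * q ω ∂μ := by
      rw [integral_congr_ae (Filter.Eventually.of_forall fun ω =>
        ind_apply_mul_apply (X ⁻¹' t) B ω), ← integral_condExp hH (f := ind (X ⁻¹' t ∩ B))]
      exact integral_congr_ae (hprod t ht)
    have hint_qA : Integrable (q * ind (X ⁻¹' t)) μ :=
      hiA.bdd_mul ((hq_sm.mono hH).aestronglyMeasurable) hq_bdd
    have e2 : ∫ ω, ind (X ⁻¹' t) ω * q ω ∂μ
        = ∫ ω, (μ[ind (X ⁻¹' t)|mH]) ω * q ω ∂μ := by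
      have c1 : ∫ ω, ind (X ⁻¹' t) ω * q ω ∂μ = ∫ ω, (q * ind (X ⁻¹' t)) ω ∂μ :=
        integral_congr_ae (Filter.Eventually.of_forall fun ω => mul_comm _ _)
      have c2 : ∫ ω, (q * ind (X ⁻¹' t)) ω ∂μ = ∫ ω, (μ[q * ind (X ⁻¹' t)|mH]) ω ∂μ :=
        (integral_condExp hH (f := q * ind (X ⁻¹' t))).symm
      have c3 : ∫ ω, (μ[q * ind (X ⁻¹' t)|mH]) ω ∂μ
          = ∫ ω, (q * μ[ind (X ⁻¹' t)|mH]) ω ∂μ :=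
        integral_congr_ae (condExp_mul_of_stronglyMeasurable_left hq_sm hint_qA hiA)
      have c4 : ∫ ω, (q * μ[ind (X ⁻¹' t)|mH]) ω ∂μ
          = ∫ ω, (μ[ind (X ⁻¹' t)|mH]) ω * q ω ∂μ :=
        integral_congr_ae (Filter.Eventually.of_forall fun ω => mul_comm _ _)
      rw [c1, c2, c3, c4]
    have hintAB : Integrable (fun ω => ind (X ⁻¹' t) ω * ind B ω) μ :=
      (ind_integrable μ hB).bdd_mul (hiA.aestronglyMeasurable)
        (Filter.Eventually.of_forall (ind_norm_le_one _))
    have hintAq : Integrable (fun ω => ind (X ⁻¹' t) ω * q ω) μ :=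
      hq_int.bdd_mul (hiA.aestronglyMeasurable)
        (Filter.Eventually.of_forall (ind_norm_le_one _))
    rw [setIntegral_eq_ind_mul μ hA]
    have hsplit : (fun ω => ind (X ⁻¹' t) ω * h ω)
        = fun ω => ind (X ⁻¹' t) ω * ind B ω - ind (X ⁻¹' t) ω * q ω :=
      funext fun ω => mul_sub _ _ _
    rw [hsplit, integral_sub hintAB hintAq, e1, e2, sub_self]
  -- conditional expectation of h with respect to σ(X) vanishes
  have hcond0 : μ[h|mX] =ᵐ[μ] (0 : Ω → ℝ) := by
    have hfi1 : ∀ A : Set Ω, Integrable (μ[h|mX]) (μ.restrict A) :=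
      fun A => integrable_condExp.restrict
    have hfi2 : ∀ A : Set Ω, Integrable (fun _ => (0:ℝ)) (μ.restrict A) :=
      fun A => integrable_zero _ _ _
    refine ae_eq_of_forall_setIntegral_eq_of_sigmaFinite' hmX
      (fun A _ _ => hfi1 A)
      (fun A _ _ => hfi2 A)
      (fun A hA _ => ?_)
      (StronglyMeasurable.aestronglyMeasurable stronglyMeasurable_condExp)
      (StronglyMeasurable.aestronglyMeasurable
        (stronglyMeasurable_const : StronglyMeasurable[mX] (fun _ => (0:ℝ))))
    rw [setIntegral_condExp hmX hh_int hA, hset A hA]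
    simp
  have hXsm : StronglyMeasurable[mX] X :=
    (Measurable.of_comap_le le_rfl).stronglyMeasurable
  have hXh_int : Integrable (X * h) μ := by
    have h1 : Integrable (fun ω => h ω * X ω) μ := hXint.bdd_mul hh_aesm hh_bdd
    exact h1.congr (Filter.Eventually.of_forall fun ω => mul_comm _ _)
  have hzero : ∫ ω, X ω * h ω ∂μ = 0 := by
    have c1 : ∫ ω, X ω * h ω ∂μ = ∫ ω, (μ[X * h|mX]) ω ∂μ :=
      (integral_condExp hmX (f := X * h)).symm
    have hpull : μ[X * h|mX] =ᵐ[μ] X * μ[h|mX] :=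
      condExp_mul_of_stronglyMeasurable_left hXsm hXh_int hh_int
    have c2 : (μ[X * h|mX]) =ᵐ[μ] (0 : Ω → ℝ) := by
      filter_upwards [hpull, hcond0] with ω h1 h2
      simp only [Pi.zero_apply] at h2
      simp [h1, h2]
    rw [c1, integral_congr_ae c2]
    simp
  have hintXB : Integrable (fun ω => X ω * ind B ω) μ :=
    (hXint.bdd_mul ((ind_integrable μ hB).aestronglyMeasurable)
      (Filter.Eventually.of_forall (ind_norm_le_one _))).congr
      (Filter.Eventually.of_forall fun ω => mul_comm _ _)
  have hintXq : Integrable (fun ω => X ω * q ω) μ :=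
    (hXint.bdd_mul ((hq_sm.mono hH).aestronglyMeasurable) hq_bdd).congr
      (Filter.Eventually.of_forall fun ω => mul_comm _ _)
  have hsub : ∫ ω, X ω * h ω ∂μ = ∫ ω, X ω * ind B ω ∂μ - ∫ ω, X ω * q ω ∂μ := by
    rw [← integral_sub hintXB hintXq]
    exact integral_congr_ae (Filter.Eventually.of_forall fun ω => mul_sub _ _ _)
  have : ∫ ω, X ω * ind B ω ∂μ = ∫ ω, X ω * q ω ∂μ := by
    have := hsub.symm.trans hzero
    linarith
  rw [integral_mul_comm' μ (ind B) X, this, integral_mul_comm' μ X q]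

end Helpers

/-- **Transport identity (key step in the proof of Theorem 2).**  Under the transportability
assumptions (`Y^(a,g) ⟂ (S,G) | 𝓗` and `S ⟂ 𝓗`), for `s ∈ {1,2}`,
`E[Y^(1) − Y^(0) | S=s] = Σ_g E[τ(g) · P(G=g|S=s,𝓗)]` (outer expectation unconditional),
and consequently
`φ_s = Σ_g Cov(τ(g), P(G=g|S=s,𝓗)) + Σ_g E[τ(g)] · P(G=g|S=s)`,
where `τ(g) = Y^(1,g) − Y^(0,g)` is the controlled individual main effect. -/
theorem transport_identity
    {Ω : Type*} [mΩ : MeasurableSpace Ω] [StandardBorelSpace Ω] [Nonempty Ω]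
    (μ : Measure Ω) [IsProbabilityMeasure μ]
    (gmax : ℕ)
    (S A G : Ω → ℕ)
    (hS : ∀ ω, S ω = 1 ∨ S ω = 2) (hSmeas : Measurable S)
    (hSpos : ∀ s, (s = 1 ∨ s = 2) → 0 < μ {ω | S ω = s})
    (hA : ∀ ω, A ω ≤ 1) (hG : ∀ ω, G ω ≤ gmax)
    (hAmeas : Measurable A) (hGmeas : Measurable G)
    (Ypo : ℕ → ℕ → Ω → ℝ)
    (hYpomeas : ∀ a ≤ 1, ∀ g ≤ gmax, Measurable (Ypo a g))
    (hYposq : ∀ a ≤ 1, ∀ g ≤ gmax, MemLp (Ypo a g) 2 μ)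
    (Ya : ℕ → Ω → ℝ)
    (hYa : ∀ a ω, Ya a ω = ∑ g ∈ Finset.range (gmax + 1), ind {ω' | G ω' = g} ω * Ypo a g ω)
    (Y : Ω → ℝ)
    (hY : ∀ ω, Y ω = ind {ω' | A ω' = 1} ω * Ya 1 ω + ind {ω' | A ω' = 0} ω * Ya 0 ω)
    (mH : MeasurableSpace Ω) (hH : mH ≤ mΩ)
    (pg : ℕ → ℕ → Ω → ℝ)
    (hpg : ∀ s g, pg s g = (μ[|{ω | S ω = s}])[ind {ω | G ω = g} | mH])
    (hpgbdd : ∀ s g, ∀ᵐ ω ∂μ, 0 ≤ pg s g ω ∧ pg s g ω ≤ 1)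
    (hpgmeas : ∀ s g, Measurable[mH] (pg s g))
    (htrans : ∀ a ≤ 1, ∀ g ≤ gmax,
      CondIndepFun mH hH (Ypo a g) (fun ω => (S ω, G ω)) μ)
    (hSH : Indep (MeasurableSpace.comap S inferInstance) mH μ) :
    ∀ s, (s = 1 ∨ s = 2) →
      (∫ ω, (Ya 1 ω - Ya 0 ω) ∂(μ[|{ω | S ω = s}])
        = ∑ g ∈ Finset.range (gmax + 1),
            ∫ ω, (Ypo 1 g ω - Ypo 0 g ω) * pg s g ω ∂μ)
      ∧ ∫ ω, (Ya 1 ω - Ya 0 ω) ∂(μ[|{ω | S ω = s}])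
        = (∑ g ∈ Finset.range (gmax + 1),
              cov μ (fun ω => Ypo 1 g ω - Ypo 0 g ω) (pg s g))
          + ∑ g ∈ Finset.range (gmax + 1),
              (∫ ω, (Ypo 1 g ω - Ypo 0 g ω) ∂μ)
                * ((μ[|{ω | S ω = s}]) {ω | G ω = g}).toReal := by
  intro s hs
  have hSsm : MeasurableSet[mΩ] {ω | S ω = s} := hSmeas (measurableSet_singleton s)
  set Ss : Set Ω := {ω | S ω = s} with hSs
  have hμSs : μ Ss ≠ 0 := (hSpos s hs).ne'
  set c : ℝ := (μ Ss).toReal with hc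
  have hc0 : 0 < c := ENNReal.toReal_pos hμSs (measure_ne_top μ Ss)
  set ν := μ[|Ss] with hν
  haveI hνP : IsProbabilityMeasure ν := cond_isProbabilityMeasure hμSs
  -- conversion from ν-integrals to μ-integrals
  have cond_int : ∀ f : Ω → ℝ, ∫ ω, f ω ∂ν = c⁻¹ * ∫ ω, ind Ss ω * f ω ∂μ := by
    intro f
    rw [hν]
    unfold ProbabilityTheory.cond
    rw [integral_smul_measure, ← setIntegral_eq_ind_mul μ hSsm, ENNReal.toReal_inv, smul_eq_mul,
      ← hc]
  -- independence of S and mH: integrals of mH-measurable functions against 1_{S=s}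
  have indep_int : ∀ ψ : Ω → ℝ, Measurable[mH] ψ → Integrable ψ μ →
      ∫ ω, ind Ss ω * ψ ω ∂μ = c * ∫ ω, ψ ω ∂μ := by
    intro ψ hψm hψint
    have hSsC : MeasurableSet[MeasurableSpace.comap S inferInstance] Ss :=
      ⟨{s}, measurableSet_singleton s, rfl⟩
    have hiF : IndepFun (ind Ss) ψ μ := by
      rw [IndepFun_iff_Indep]
      exact indep_of_indep_of_le_right
        (indep_of_indep_of_le_left hSH (Measurable.comap_le (ind_measurable hSsC)))
        (Measurable.comap_le hψm)
    have h3 : ∫ ω, ind Ss ω * ψ ω ∂μ = (∫ ω, ind Ss ω ∂μ) * ∫ ω, ψ ω ∂μ :=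
      hiF.integral_fun_mul_eq_mul_integral (ind_integrable μ hSsm).aestronglyMeasurable
        hψint.aestronglyMeasurable
    rw [h3, integral_ind μ hSsm, ← hc]
  have Hint : ∀ ψ : Ω → ℝ, Measurable[mH] ψ → Integrable ψ μ →
      ∫ ω, ψ ω ∂ν = ∫ ω, ψ ω ∂μ := by
    intro ψ hm hint
    rw [cond_int ψ, indep_int ψ hm hint, ← mul_assoc, inv_mul_cancel₀ hc0.ne', one_mul]
  -- basic facts about pg
  have pgm : ∀ g, Measurable[mΩ] (pg s g) := fun g => (hpgmeas s g).mono hH le_rfl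
  have pgnorm : ∀ g, ∀ᵐ ω ∂μ, ‖pg s g ω‖ ≤ 1 := by
    intro g; filter_upwards [hpgbdd s g] with ω h
    rw [Real.norm_eq_abs, abs_le]; exact ⟨by linarith [h.1], h.2⟩
  have pg_int : ∀ g, Integrable (pg s g) μ := fun g =>
    (integrable_const (1:ℝ)).mono' ((pgm g).aestronglyMeasurable) (pgnorm g)
  have hpg' : ∀ g, pg s g = ν[ind {ω | G ω = g}|mH] := by
    intro g; rw [hpg s g, ← hSs, ← hν]
  have hGgm : ∀ g : ℕ, MeasurableSet[mΩ] {ω | G ω = g} :=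
    fun g => hGmeas (measurableSet_singleton g)
  have pg_tot : ∀ g : ℕ, ∫ ω, pg s g ω ∂μ = (ν {ω | G ω = g}).toReal := by
    intro g
    have h1 : ∫ ω, pg s g ω ∂ν = ∫ ω, pg s g ω ∂μ := Hint _ (hpgmeas s g) (pg_int g)
    have h2 : ∫ ω, pg s g ω ∂ν = (ν {ω | G ω = g}).toReal := by
      rw [hpg' g, integral_condExp hH, integral_ind ν (hGgm g)]
    rw [← h1, h2]
  -- identification of the conditional expectation of the joint indicator
  have q_eq : ∀ g : ℕ, (μ[ind (Ss ∩ {ω | G ω = g})|mH]) =ᵐ[μ] fun ω => c * pg s g ω := by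
    intro g
    have hBm : MeasurableSet[mΩ] (Ss ∩ {ω | G ω = g}) := hSsm.inter (hGgm g)
    have hfi1 : ∀ A : Set Ω, Integrable (μ[ind (Ss ∩ {ω | G ω = g})|mH]) (μ.restrict A) :=
      fun A => integrable_condExp.restrict
    have hfi2 : ∀ A : Set Ω, Integrable (fun ω => c * pg s g ω) (μ.restrict A) :=
      fun A => ((pg_int g).const_mul c).restrict
    refine ae_eq_of_forall_setIntegral_eq_of_sigmaFinite' hH
      (fun A _ _ => hfi1 A) (fun A _ _ => hfi2 A) (fun A hA _ => ?_)
      (StronglyMeasurable.aestronglyMeasurable stronglyMeasurable_condExp)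
      (StronglyMeasurable.aestronglyMeasurable ((hpgmeas s g).const_mul c).stronglyMeasurable)
    have hAm : MeasurableSet[mΩ] A := hH A hA
    have lhs1 : ∫ ω in A, (μ[ind (Ss ∩ {ω | G ω = g})|mH]) ω ∂μ
        = (μ (Ss ∩ {ω | G ω = g} ∩ A)).toReal := by
      rw [setIntegral_condExp hH (ind_integrable μ hBm) hA,
        setIntegral_eq_ind_mul μ hAm,
        integral_congr_ae (Filter.Eventually.of_forall fun ω =>
          ind_apply_mul_apply A (Ss ∩ {ω | G ω = g}) ω),
        integral_ind μ (hAm.inter hBm), Set.inter_comm]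
    have hψm : Measurable[mH] (fun ω => ind A ω * pg s g ω) :=
      (ind_measurable hA).mul (hpgmeas s g)
    have hψint : Integrable (fun ω => ind A ω * pg s g ω) μ :=
      (pg_int g).bdd_mul ((ind_measurable hAm).aestronglyMeasurable)
        (Filter.Eventually.of_forall (ind_norm_le_one A))
    have r2 : ∫ ω in A, pg s g ω ∂μ = ∫ ω in A, pg s g ω ∂ν := by
      rw [setIntegral_eq_ind_mul μ hAm, setIntegral_eq_ind_mul ν hAm, Hint _ hψm hψint]
    have r3 : ∫ ω in A, pg s g ω ∂ν = (ν ({ω | G ω = g} ∩ A)).toReal := by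
      rw [hpg' g, setIntegral_condExp hH (ind_integrable ν (hGgm g)) hA,
        setIntegral_eq_ind_mul ν hAm,
        integral_congr_ae (Filter.Eventually.of_forall fun ω =>
          ind_apply_mul_apply A {ω | G ω = g} ω),
        integral_ind ν (hAm.inter (hGgm g)), Set.inter_comm]
    have r4 : (ν ({ω | G ω = g} ∩ A)).toReal
        = c⁻¹ * (μ (Ss ∩ ({ω | G ω = g} ∩ A))).toReal := by
      rw [hν, cond_apply hSsm, ENNReal.toReal_mul, ENNReal.toReal_inv, ← hc]
    have rhs1 : ∫ ω in A, c * pg s g ω ∂μ = (μ (Ss ∩ {ω | G ω = g} ∩ A)).toReal := by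
      rw [integral_const_mul, r2, r3, r4, ← mul_assoc, mul_inv_cancel₀ hc0.ne', one_mul,
        ← Set.inter_assoc]
    rw [lhs1, rhs1]
  -- the key per-g identity, via conditional independence
  have hSGm : Measurable[mΩ] fun ω => (S ω, G ω) := hSmeas.prodMk hGmeas
  have key_g : ∀ g, g ≤ gmax →
      ∫ ω, ind (Ss ∩ {ω' | G ω' = g}) ω * (Ypo 1 g ω - Ypo 0 g ω) ∂μ
        = c * ∫ ω, (Ypo 1 g ω - Ypo 0 g ω) * pg s g ω ∂μ := by
    intro g hg
    have hBm : MeasurableSet[mΩ] (Ss ∩ {ω' | G ω' = g}) := hSsm.inter (hGgm g)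
    have hint : ∀ a, a ≤ 1 → Integrable (Ypo a g) μ :=
      fun a ha => (hYposq a ha g hg).integrable one_le_two
    have hkey : ∀ a, a ≤ 1 → ∫ ω, ind (Ss ∩ {ω' | G ω' = g}) ω * Ypo a g ω ∂μ
        = ∫ ω, (μ[ind (Ss ∩ {ω' | G ω' = g})|mH]) ω * Ypo a g ω ∂μ := by
      intro a ha
      have hBeq : (fun ω => (S ω, G ω)) ⁻¹' {(s, g)} = Ss ∩ {ω' | G ω' = g} := by
        ext ω; simp [hSs, Prod.ext_iff]
      have hci := (condIndepFun_iff_condExp_inter_preimage_eq_mul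
        (hYpomeas a ha g hg) hSGm).mp (htrans a ha g hg)
      refine key_ortho μ hH (hYpomeas a ha g hg) (hint a ha) hBm ?_
      intro t ht
      have h5 := hci t {(s, g)} ht (measurableSet_singleton _)
      rw [hBeq] at h5
      exact h5
    have hq_Y : ∀ a, a ≤ 1 → ∫ ω, (μ[ind (Ss ∩ {ω' | G ω' = g})|mH]) ω * Ypo a g ω ∂μ
        = c * ∫ ω, pg s g ω * Ypo a g ω ∂μ := by
      intro a ha
      have hcg : (fun ω => (μ[ind (Ss ∩ {ω' | G ω' = g})|mH]) ω * Ypo a g ω)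
          =ᵐ[μ] fun ω => c * (pg s g ω * Ypo a g ω) := by
        filter_upwards [q_eq g] with ω hω
        rw [hω]; ring
      rw [integral_congr_ae hcg, integral_const_mul]
    have hiB : ∀ a, a ≤ 1 →
        Integrable (fun ω => ind (Ss ∩ {ω' | G ω' = g}) ω * Ypo a g ω) μ :=
      fun a ha => (hint a ha).bdd_mul ((ind_measurable hBm).aestronglyMeasurable)
        (Filter.Eventually.of_forall (ind_norm_le_one _))
    have hiP : ∀ a, a ≤ 1 → Integrable (fun ω => pg s g ω * Ypo a g ω) μ :=
      fun a ha => (hint a ha).bdd_mul ((pgm g).aestronglyMeasurable) (pgnorm g)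
    have heq1 : (fun ω => ind (Ss ∩ {ω' | G ω' = g}) ω * (Ypo 1 g ω - Ypo 0 g ω))
        = fun ω => ind (Ss ∩ {ω' | G ω' = g}) ω * Ypo 1 g ω
            - ind (Ss ∩ {ω' | G ω' = g}) ω * Ypo 0 g ω :=
      funext fun ω => mul_sub _ _ _
    have heq2 : (fun ω => pg s g ω * Ypo 1 g ω - pg s g ω * Ypo 0 g ω)
        = fun ω => (Ypo 1 g ω - Ypo 0 g ω) * pg s g ω :=
      funext fun ω => by ring
    rw [heq1, integral_sub (hiB 1 le_rfl) (hiB 0 (Nat.zero_le 1)),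
      hkey 1 le_rfl, hkey 0 (Nat.zero_le 1), hq_Y 1 le_rfl, hq_Y 0 (Nat.zero_le 1),
      ← mul_sub, ← integral_sub (hiP 1 le_rfl) (hiP 0 (Nat.zero_le 1)), heq2]
  -- integrability transfer to ν
  have int_ν : ∀ f : Ω → ℝ, Integrable f μ → Integrable f ν := by
    intro f hf
    rw [hν]
    unfold ProbabilityTheory.cond
    exact (hf.restrict).smul_measure (ENNReal.inv_ne_top.mpr hμSs)
  have e0 : ∀ ω, Ya 1 ω - Ya 0 ω = ∑ g ∈ Finset.range (gmax + 1),
      ind {ω' | G ω' = g} ω * (Ypo 1 g ω - Ypo 0 g ω) := by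
    intro ω
    rw [hYa 1 ω, hYa 0 ω, ← Finset.sum_sub_distrib]
    exact Finset.sum_congr rfl fun g _ => (mul_sub _ _ _).symm
  have hint_ν : ∀ g ∈ Finset.range (gmax + 1),
      Integrable (fun ω => ind {ω' | G ω' = g} ω * (Ypo 1 g ω - Ypo 0 g ω)) ν := by
    intro g hgmem
    have hg : g ≤ gmax := Nat.lt_succ_iff.mp (Finset.mem_range.mp hgmem)
    have hτ : Integrable (fun ω => Ypo 1 g ω - Ypo 0 g ω) μ :=
      ((hYposq 1 le_rfl g hg).integrable one_le_two).sub
        ((hYposq 0 (Nat.zero_le 1) g hg).integrable one_le_two)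
    exact (int_ν _ hτ).bdd_mul ((ind_measurable (hGgm g)).aestronglyMeasurable)
      (Filter.Eventually.of_forall (ind_norm_le_one _))
  have part1 : ∫ ω, (Ya 1 ω - Ya 0 ω) ∂ν = ∑ g ∈ Finset.range (gmax + 1),
      ∫ ω, (Ypo 1 g ω - Ypo 0 g ω) * pg s g ω ∂μ := by
    have s1 : ∫ ω, (Ya 1 ω - Ya 0 ω) ∂ν
        = ∫ ω, (∑ g ∈ Finset.range (gmax + 1),
            ind {ω' | G ω' = g} ω * (Ypo 1 g ω - Ypo 0 g ω)) ∂ν :=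
      integral_congr_ae (Filter.Eventually.of_forall fun ω => e0 ω)
    rw [s1, integral_finset_sum _ hint_ν]
    refine Finset.sum_congr rfl fun g hgmem => ?_
    have hg : g ≤ gmax := Nat.lt_succ_iff.mp (Finset.mem_range.mp hgmem)
    have s2 : (fun ω => ind Ss ω * (ind {ω' | G ω' = g} ω * (Ypo 1 g ω - Ypo 0 g ω)))
        = fun ω => ind (Ss ∩ {ω' | G ω' = g}) ω * (Ypo 1 g ω - Ypo 0 g ω) := by
      funext ω; rw [← mul_assoc, ind_apply_mul_apply]
    calc ∫ ω, ind {ω' | G ω' = g} ω * (Ypo 1 g ω - Ypo 0 g ω) ∂ν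
        = c⁻¹ * ∫ ω, ind Ss ω * (ind {ω' | G ω' = g} ω * (Ypo 1 g ω - Ypo 0 g ω)) ∂μ :=
          cond_int _
      _ = c⁻¹ * ∫ ω, ind (Ss ∩ {ω' | G ω' = g}) ω * (Ypo 1 g ω - Ypo 0 g ω) ∂μ := by
          rw [s2]
      _ = c⁻¹ * (c * ∫ ω, (Ypo 1 g ω - Ypo 0 g ω) * pg s g ω ∂μ) := by rw [key_g g hg]
      _ = ∫ ω, (Ypo 1 g ω - Ypo 0 g ω) * pg s g ω ∂μ := by
          rw [← mul_assoc, inv_mul_cancel₀ hc0.ne', one_mul]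
  refine ⟨part1, ?_⟩
  rw [part1, ← Finset.sum_add_distrib]
  refine Finset.sum_congr rfl fun g hgmem => ?_
  simp only [cov]
  rw [← pg_tot g]
  ring
end

section
/- Relations between θ and the natural average main effects (Remark 1): with θ := Σ_{g=0}^{g_max} P(G=g|S=1) · E[τ(g)|S=1]: (a) if under P(·|S=2) each τ(g) is uncorrelated with 1{G=g} (as holds when τ(g) is independent of G given S=2), if G is independent of S, and if E[τ(g)|S=1] = E[τ(g)|S=2] for all g, then θ = φ₂; (b) if under P(·|S=1) each τ(g) is uncorrelated with 1{G=g}, then θ = φ₁. -/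
open MeasureTheory ProbabilityTheory Set

/-- **Relations between θ and the natural average main effects (Remark 1).**  With
`θ = Σ_g P(G=g|S=1)·E[τ(g)|S=1]` and `τ(g) = Y^(1,g) − Y^(0,g)`:
(a) if under `P(·|S=2)` each `τ(g)` is uncorrelated with `1{G=g}`, if `G` is independent of
`S`, and if `E[τ(g)|S=1] = E[τ(g)|S=2]` for all `g`, then `θ = φ₂`;
(b) if under `P(·|S=1)` each `τ(g)` is uncorrelated with `1{G=g}`, then `θ = φ₁`. -/
theorem theta_relations
    {Ω : Type*} [mΩ : MeasurableSpace Ω]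
    (μ : Measure Ω) [IsProbabilityMeasure μ]
    (gmax : ℕ)
    (S A G : Ω → ℕ)
    (hS : ∀ ω, S ω = 1 ∨ S ω = 2) (hSmeas : Measurable S)
    (hSpos : ∀ s, (s = 1 ∨ s = 2) → 0 < μ {ω | S ω = s})
    (hA : ∀ ω, A ω ≤ 1) (hG : ∀ ω, G ω ≤ gmax)
    (hAmeas : Measurable A) (hGmeas : Measurable G)
    (Ypo : ℕ → ℕ → Ω → ℝ)
    (hYpomeas : ∀ a ≤ 1, ∀ g ≤ gmax, Measurable (Ypo a g))
    (hYposq : ∀ a ≤ 1, ∀ g ≤ gmax, MemLp (Ypo a g) 2 μ)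
    (Ya : ℕ → Ω → ℝ)
    (hYa : ∀ a ω, Ya a ω = ∑ g ∈ Finset.range (gmax + 1), ind {ω' | G ω' = g} ω * Ypo a g ω)
    (θ : ℝ)
    (hθ : θ = ∑ g ∈ Finset.range (gmax + 1),
        ((μ[|{ω | S ω = 1}]) {ω | G ω = g}).toReal
          * ∫ ω, (Ypo 1 g ω - Ypo 0 g ω) ∂(μ[|{ω | S ω = 1}])) :
    -- (a)
    ((∀ g ≤ gmax,
        cov (μ[|{ω | S ω = 2}]) (fun ω => Ypo 1 g ω - Ypo 0 g ω) (ind {ω | G ω = g}) = 0) →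
      IndepFun G S μ →
      (∀ g ≤ gmax,
        (∫ ω, (Ypo 1 g ω - Ypo 0 g ω) ∂(μ[|{ω | S ω = 1}]))
          = ∫ ω, (Ypo 1 g ω - Ypo 0 g ω) ∂(μ[|{ω | S ω = 2}])) →
      θ = ∫ ω, (Ya 1 ω - Ya 0 ω) ∂(μ[|{ω | S ω = 2}]))
    -- (b)
    ∧ ((∀ g ≤ gmax,
        cov (μ[|{ω | S ω = 1}]) (fun ω => Ypo 1 g ω - Ypo 0 g ω) (ind {ω | G ω = g}) = 0) →
      θ = ∫ ω, (Ya 1 ω - Ya 0 ω) ∂(μ[|{ω | S ω = 1}])) := by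
  -- measurability of the level sets of S and G
  have hSset : ∀ s : ℕ, MeasurableSet {ω | S ω = s} := fun s =>
    hSmeas (measurableSet_singleton s)
  have hGset : ∀ g : ℕ, MeasurableSet {ω | G ω = g} := fun g =>
    hGmeas (measurableSet_singleton g)
  have hSne : ∀ s, (s = 1 ∨ s = 2) → μ {ω | S ω = s} ≠ 0 := fun s hs =>
    (hSpos s hs).ne'
  -- the key computation, for either population
  have key : ∀ s : ℕ, (s = 1 ∨ s = 2) →
      (∀ g ≤ gmax,
        cov (μ[|{ω | S ω = s}]) (fun ω => Ypo 1 g ω - Ypo 0 g ω) (ind {ω | G ω = g}) = 0) →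
      ∫ ω, (Ya 1 ω - Ya 0 ω) ∂(μ[|{ω | S ω = s}]) =
        ∑ g ∈ Finset.range (gmax + 1),
          ((μ[|{ω | S ω = s}]) {ω | G ω = g}).toReal
            * ∫ ω, (Ypo 1 g ω - Ypo 0 g ω) ∂(μ[|{ω | S ω = s}]) := by
    intro s hs hcov
    set ν : Measure Ω := μ[|{ω | S ω = s}] with hν
    haveI : IsProbabilityMeasure ν := cond_isProbabilityMeasure (hSne s hs)
    -- integrability of τ g under ν
    have hτint : ∀ g ≤ gmax, Integrable (fun ω => Ypo 1 g ω - Ypo 0 g ω) ν := by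
      intro g hg
      have h2 : MemLp (fun ω => Ypo 1 g ω - Ypo 0 g ω) 2 μ :=
        (hYposq 1 le_rfl g hg).sub (hYposq 0 (by norm_num) g hg)
      have h2ν : MemLp (fun ω => Ypo 1 g ω - Ypo 0 g ω) 2 ν := by
        rw [hν, ProbabilityTheory.cond]
        exact (h2.restrict _).smul_measure (ENNReal.inv_ne_top.mpr (hSne s hs))
      exact h2ν.integrable (by norm_num)
    have hindmeas : ∀ g : ℕ, Measurable (ind {ω | G ω = g}) := fun g =>
      (measurable_const.indicator (hGset g))
    have hint : ∀ g ≤ gmax,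
        Integrable (fun ω => ind {ω' | G ω' = g} ω * (Ypo 1 g ω - Ypo 0 g ω)) ν := by
      intro g hg
      refine (hτint g hg).bdd_mul (c := 1) ((hindmeas g).aestronglyMeasurable) (Filter.Eventually.of_forall fun ω => ?_)
      simp only [ind]
      by_cases h : ω ∈ {ω' | G ω' = g} <;>
        simp [Set.indicator_apply, h]
    -- pointwise decomposition
    have hpt : ∀ ω, Ya 1 ω - Ya 0 ω =
        ∑ g ∈ Finset.range (gmax + 1),
          ind {ω' | G ω' = g} ω * (Ypo 1 g ω - Ypo 0 g ω) := by
      intro ω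
      rw [hYa 1 ω, hYa 0 ω, ← Finset.sum_sub_distrib]
      exact Finset.sum_congr rfl fun g _ => (mul_sub _ _ _).symm
    calc ∫ ω, (Ya 1 ω - Ya 0 ω) ∂ν
        = ∫ ω, (∑ g ∈ Finset.range (gmax + 1),
            ind {ω' | G ω' = g} ω * (Ypo 1 g ω - Ypo 0 g ω)) ∂ν := by
          exact integral_congr_ae (Filter.Eventually.of_forall hpt)
      _ = ∑ g ∈ Finset.range (gmax + 1),
            ∫ ω, ind {ω' | G ω' = g} ω * (Ypo 1 g ω - Ypo 0 g ω) ∂ν := by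
          exact integral_finset_sum _ fun g hg =>
            hint g (Nat.lt_succ_iff.mp (Finset.mem_range.mp hg))
      _ = ∑ g ∈ Finset.range (gmax + 1),
            (ν {ω | G ω = g}).toReal * ∫ ω, (Ypo 1 g ω - Ypo 0 g ω) ∂ν := by
          refine Finset.sum_congr rfl fun g hg => ?_
          have hg' : g ≤ gmax := Nat.lt_succ_iff.mp (Finset.mem_range.mp hg)
          have hc := hcov g hg'
          have hcomm : (∫ ω, ind {ω' | G ω' = g} ω * (Ypo 1 g ω - Ypo 0 g ω) ∂ν)
              = ∫ ω, (Ypo 1 g ω - Ypo 0 g ω) * ind {ω' | G ω' = g} ω ∂ν := by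
            exact integral_congr_ae (Filter.Eventually.of_forall fun ω => mul_comm _ _)
          have hindint : (∫ ω, ind {ω' | G ω' = g} ω ∂ν) = (ν {ω | G ω = g}).toReal := by
            simp only [ind]; rw [← measureReal_def]; exact integral_indicator_one (μ := ν) (hGset g)
          rw [hcomm]
          have := hc
          unfold cov at this
          have h' : (∫ ω, (Ypo 1 g ω - Ypo 0 g ω) * ind {ω' | G ω' = g} ω ∂ν)
              = (∫ ω, (Ypo 1 g ω - Ypo 0 g ω) ∂ν) * ∫ ω, ind {ω' | G ω' = g} ω ∂ν := by
            linarith [this]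
          rw [h', hindint, mul_comm]
  constructor
  · -- (a)
    intro hcov hindep hEeq
    have hGprob : ∀ g : ℕ,
        (μ[|{ω | S ω = 1}]) {ω | G ω = g} = (μ[|{ω | S ω = 2}]) {ω | G ω = g} := by
      intro g
      have h1 : ∀ s : ℕ, (s = 1 ∨ s = 2) →
          (μ[|{ω | S ω = s}]) {ω | G ω = g} = μ {ω | G ω = g} := by
        intro s hs
        rw [cond_apply (hSset s)]
        have hinter : {ω | S ω = s} ∩ {ω | G ω = g} = G ⁻¹' {g} ∩ S ⁻¹' {s} := by
          ext ω; simp [Set.mem_inter_iff, and_comm]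
        rw [hinter, hindep.measure_inter_preimage_eq_mul _ _ (measurableSet_singleton g)
          (measurableSet_singleton s)]
        have hSnes : μ (S ⁻¹' {s}) ≠ 0 := hSne s hs
        have hSnetop : μ (S ⁻¹' {s}) ≠ ⊤ := measure_ne_top μ _
        rw [mul_comm]
        show μ (G ⁻¹' {g}) * μ (S ⁻¹' {s}) * (μ (S ⁻¹' {s}))⁻¹ = μ (G ⁻¹' {g})
        rw [mul_assoc, ENNReal.mul_inv_cancel hSnes hSnetop, mul_one]
      rw [h1 1 (Or.inl rfl), h1 2 (Or.inr rfl)]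
    rw [key 2 (Or.inr rfl) hcov, hθ]
    refine Finset.sum_congr rfl fun g hg => ?_
    have hg' : g ≤ gmax := Nat.lt_succ_iff.mp (Finset.mem_range.mp hg)
    rw [hGprob g, hEeq g hg']
  · -- (b)
    intro hcov
    rw [key 1 (Or.inl rfl) hcov, hθ]
end
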